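/- Let (L, ≤) be a finite partially ordered type, Σ a subset of L, and Δ a positive integer. Let N be a set of multisets of cardinality Δ over Σ (the node constraint) and E a set of multisets of cardinality 2 over Σ (the edge constraint). Let N' be a set of multisets of cardinality Δ over L such that every member of N is dominated by some member of N' (i.e., related to it by Multiset.Rel (· ≤ ·)), and let E' be a set of multisets of cardinality 2 over L that contains E and is upward closed (if {x, y} ∈ E', x ≤ x', and y ≤ y', then {x', y'} ∈ E'). Then for every finite simple graph G in which every vertex has degree Δ, and every half-edge labeling f with values in Σ such that every node configuration under f belongs to N and every edge configuration under f belongs to E, there exists a half-edge labeling f' with values in L such that f v u ≤ f' v u for all adjacent pairs (v, u), every node configuration under f' belongs to N', and every edge configuration under f' belongs to E'. (Given a solution for Π, the relaxed problem Π' produced by the FixedPoint procedure — whose node constraint dominates N and whose edge constraint is the upward-closed set ⟨E⟩ containing E — can be solved in 0 rounds.) -/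
import Mathlib


namespace RoundElim

/-- The node configuration of vertex `v` under the half-edge labeling `f`:
the multiset of labels `f v u` over the neighbors `u` of `v`. -/
def nodeConfig {V Λ : Type*} (G : SimpleGraph V) [Fintype V] [DecidableRel G.Adj]
    (f : V → V → Λ) (v : V) : Multiset Λ :=
  (G.neighborFinset v).val.map (f v)

/-- Given a solution for `Π` (node constraint `N`, edge constraint `E`, labels in `Sg ⊆ L`),
the relaxed problem `Π'` — whose node constraint `N'` dominates `N` and whose edge constraint
`E'` is upward closed and contains `E` — can be solved in 0 rounds: each half-edge label can be
replaced by a larger label so that node configurations land in `N'` and edge configurations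
land in `E'`. -/

private lemma exists_fun_of_rel_map {α β : Type*} (r : β → β → Prop) (g : α → β) :
    ∀ (l : List α), l.Nodup → ∀ (t : Multiset β), Multiset.Rel r (l.map g : List β) t →
    ∃ g' : α → β, t = ((l.map g' : List β) : Multiset β) ∧ ∀ a ∈ l, r (g a) (g' a) := by
  classical
  intro l
  induction l with
  | nil =>
    intro _ t ht
    simp only [List.map_nil, Multiset.coe_nil] at ht
    rw [Multiset.rel_zero_left] at ht
    exact ⟨g, by simp [ht], by simp⟩
  | cons a l ih =>
    intro hnd t ht
    simp only [List.map_cons] at ht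
    rw [show ((g a :: l.map g : List β) : Multiset β) = g a ::ₘ (l.map g : List β) from rfl,
      Multiset.rel_cons_left] at ht
    obtain ⟨b, t', hrb, hrel, rfl⟩ := ht
    obtain ⟨g', rfl, hg'⟩ := ih hnd.of_cons t' hrel
    refine ⟨Function.update g' a b, ?_, ?_⟩
    · have hmap : l.map (Function.update g' a b) = l.map g' := by
        apply List.map_congr_left
        intro x hx
        exact Function.update_of_ne (fun h : x = a => (List.nodup_cons.mp hnd).1 (h ▸ hx)) _ _
      simp [hmap]
    · intro x hx
      rcases List.mem_cons.mp hx with rfl | hx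
      · simpa using hrb
      · rw [Function.update_of_ne (fun h : x = a => (List.nodup_cons.mp hnd).1 (h ▸ hx))]
        exact hg' x hx

theorem fixedPoint_relaxation_zero_round
    {L : Type*} [PartialOrder L] [Fintype L]
    (Sg : Set L) (Δ : ℕ) (hΔ : 0 < Δ)
    (N : Set (Multiset L)) (hN : ∀ M ∈ N, Multiset.card M = Δ ∧ ∀ x ∈ M, x ∈ Sg)
    (E : Set (Multiset L)) (hE : ∀ M ∈ E, Multiset.card M = 2 ∧ ∀ x ∈ M, x ∈ Sg)
    (N' : Set (Multiset L)) (hN' : ∀ M ∈ N', Multiset.card M = Δ)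
    (hNdom : ∀ M ∈ N, ∃ M' ∈ N', Multiset.Rel (· ≤ ·) M M')
    (E' : Set (Multiset L)) (hE'card : ∀ M ∈ E', Multiset.card M = 2)
    (hEE' : E ⊆ E')
    (hup : ∀ x y x' y' : L, ({x, y} : Multiset L) ∈ E' → x ≤ x' → y ≤ y' →
      ({x', y'} : Multiset L) ∈ E')
    {V : Type*} [Fintype V] (G : SimpleGraph V) [DecidableRel G.Adj]
    (hreg : ∀ v : V, G.degree v = Δ)
    (f : V → V → L)
    (hfS : ∀ v u : V, G.Adj v u → f v u ∈ Sg)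
    (hfN : ∀ v : V, nodeConfig G f v ∈ N)
    (hfE : ∀ u v : V, G.Adj u v → ({f u v, f v u} : Multiset L) ∈ E) :
    ∃ f' : V → V → L,
      (∀ v u : V, G.Adj v u → f v u ≤ f' v u) ∧
      (∀ v : V, nodeConfig G f' v ∈ N') ∧
      (∀ u v : V, G.Adj u v → ({f' u v, f' v u} : Multiset L) ∈ E') := by
  classical
  choose M' hM'mem hM'rel using fun v => hNdom _ (hfN v)
  have key : ∀ v : V, ∃ gv : V → L,
      M' v = ((G.neighborFinset v).val.toList.map gv : List L) ∧
      ∀ u ∈ (G.neighborFinset v).val.toList, f v u ≤ gv u := by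
    intro v
    have h := hM'rel v
    have : Multiset.Rel (· ≤ ·) ((G.neighborFinset v).val.toList.map (f v) : List L) (M' v) := by
      rw [← Multiset.map_coe, Multiset.coe_toList]
      exact h
    exact exists_fun_of_rel_map _ _ _ ((G.neighborFinset v).nodup_toList) _ this
  choose g' hg'map hg'le using key
  refine ⟨fun v => g' v, ?_, ?_, ?_⟩
  · intro v u hadj
    exact hg'le v u (by simp [Multiset.mem_toList, SimpleGraph.mem_neighborFinset, hadj])
  · intro v
    have : nodeConfig G (fun v => g' v) v = M' v := by
      rw [hg'map v, nodeConfig, ← Multiset.map_coe, Multiset.coe_toList]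
    rw [this]; exact hM'mem v
  · intro u v hadj
    have h1 : f u v ≤ g' u v :=
      hg'le u v (by simp [Multiset.mem_toList, SimpleGraph.mem_neighborFinset, hadj])
    have h2 : f v u ≤ g' v u :=
      hg'le v u (by simp [Multiset.mem_toList, SimpleGraph.mem_neighborFinset, hadj.symm])
    exact hup _ _ _ _ (hEE' (hfE u v hadj)) h1 h2

end RoundElim
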